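/- Let k ≥ 1 be an integer, 0 < T ≤ ∞, 0 ≤ t₁ < t₂ < T and 0 < R ≤ 1. Let h, h₁, h₂ : [0,1] × [0,T) → ℝ be continuous functions which on (0,1) × (0,T) have continuous partial derivatives ∂_t, ∂_r, ∂_r² satisfying ∂_t u = ∂_r² u + ∂_r u/r − k²·sin(2u)/(2r²). Assume for each i ∈ {1,2}: either h(0,t) ≠ h_i(0,t) for every t ∈ [0,T), or there is m_i ∈ ℤ with h(0,t) = h_i(0,t) = m_i·π for every t ∈ [0,T). Let Γ be a nonempty connected component of {(r,t) ∈ [0,R] × [t₁,t₂] : h₁(r,t) < h(r,t) < h₂(r,t)} and suppose there exists C ∈ ℝ with sup over closure(Γ) of h₁ < C < inf over closure(Γ) of h₂. Then Γ intersects ({0} × [t₁,t₂]) ∪ ({R} × [t₁,t₂]) ∪ ([0,R] × {t₁}). -/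

import Mathlib

open Real Set

/-- Partial derivative in the radial variable `r` of `h(r,t)`. -/
noncomputable def pdr (h : ℝ × ℝ → ℝ) (p : ℝ × ℝ) : ℝ :=
  deriv (fun r => h (r, p.2)) p.1

/-- Second partial derivative in `r` of `h(r,t)`. -/
noncomputable def pdrr (h : ℝ × ℝ → ℝ) (p : ℝ × ℝ) : ℝ :=
  deriv (fun r => pdr h (r, p.2)) p.1

/-- Partial derivative in the time variable `t` of `h(r,t)`. -/
noncomputable def pdt (h : ℝ × ℝ → ℝ) (p : ℝ × ℝ) : ℝ :=
  deriv (fun t => h (p.1, t)) p.2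

/-- `h` is a classical solution of the `k`-equivariant radial harmonic map heat flow equation
`∂_t h = ∂_r² h + ∂_r h / r − k² sin(2h)/(2r²)` on the set `S`. -/
def IsClassicalSol (k : ℕ) (S : Set (ℝ × ℝ)) (h : ℝ × ℝ → ℝ) : Prop :=
  (∀ p ∈ S, DifferentiableAt ℝ (fun r => h (r, p.2)) p.1 ∧
      DifferentiableAt ℝ (fun r => pdr h (r, p.2)) p.1 ∧
      DifferentiableAt ℝ (fun t => h (p.1, t)) p.2) ∧
  ContinuousOn (pdr h) S ∧ ContinuousOn (pdrr h) S ∧ ContinuousOn (pdt h) S ∧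
  ∀ p ∈ S, pdt h p = pdrr h p + pdr h p / p.1 - (k : ℝ) ^ 2 * sin (2 * h p) / (2 * p.1 ^ 2)

/-- Lipschitz bound for sin. -/
lemma sin_diff_le (x y : ℝ) : |Real.sin x - Real.sin y| ≤ |x - y| := by
  rw [Real.sin_sub_sin]
  have h1 : |Real.sin ((x - y) / 2)| ≤ |(x - y) / 2| := Real.abs_sin_le_abs
  have h2 : |Real.cos ((x + y) / 2)| ≤ 1 := Real.abs_cos_le_one _
  calc |2 * Real.sin ((x - y) / 2) * Real.cos ((x + y) / 2)|
      = 2 * |Real.sin ((x - y) / 2)| * |Real.cos ((x + y) / 2)| := by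
        rw [abs_mul, abs_mul]; norm_num
    _ ≤ 2 * |(x - y) / 2| * 1 := by
        apply mul_le_mul _ h2 (abs_nonneg _) (by positivity)
        exact mul_le_mul_of_nonneg_left h1 (by norm_num)
    _ = |x - y| := by rw [abs_div]; simp; ring

/-- Second derivative test (necessary condition) at a local max. -/
lemma second_deriv_nonpos_of_localmax {f F : ℝ → ℝ} {a ε : ℝ} (hε : 0 < ε)
    (hmax : ∀ r, |r - a| < ε → f r ≤ f a)
    (hdiff : ∀ r, |r - a| < ε → DifferentiableAt ℝ f r)
    (hF : ∀ r, |r - a| < ε → deriv f r = F r)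
    (hF0 : F a = 0)
    (hFd : DifferentiableAt ℝ F a) : deriv F a ≤ 0 := by
  by_contra hd
  push_neg at hd
  have hslope : Filter.Tendsto (slope F a) (nhdsWithin a {a}ᶜ) (nhds (deriv F a)) :=
    hasDerivAt_iff_tendsto_slope.mp hFd.hasDerivAt
  have hev : ∀ᶠ x in nhdsWithin a {a}ᶜ, 0 < slope F a x :=
    hslope.eventually (eventually_gt_nhds hd)
  rw [eventually_nhdsWithin_iff, Metric.eventually_nhds_iff] at hev
  obtain ⟨δ, hδ, hδev⟩ := hev
  set b := min δ ε / 2 with hb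
  have hbpos : 0 < b := by positivity
  have hbδ : b < δ := by
    have h1 : min δ ε ≤ δ := min_le_left _ _
    simp only [hb]; linarith
  have hbε : b < ε := by
    have h1 : min δ ε ≤ ε := min_le_right _ _
    simp only [hb]; linarith
  have hmono : StrictMonoOn f (Icc a (a + b)) := by
    apply strictMonoOn_of_deriv_pos (convex_Icc _ _)
    · intro x hx
      have hx' : |x - a| < ε := by
        rw [abs_sub_lt_iff]; constructor <;> [skip; skip] <;>
          simp only [mem_Icc] at hx <;> [linarith; linarith]
      exact (hdiff x hx').continuousAt.continuousWithinAt
    · intro x hx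
      rw [interior_Icc, mem_Ioo] at hx
      have hxε : |x - a| < ε := by rw [abs_sub_lt_iff]; constructor <;> linarith
      rw [hF x hxε]
      have hxa : x ≠ a := by intro hh; rw [hh] at hx; linarith [hx.1]
      have hdist : dist x a < δ := by
        rw [Real.dist_eq, abs_sub_lt_iff]; constructor <;> linarith
      have h2 : 0 < slope F a x := hδev hdist hxa
      rw [slope_def_field, hF0, sub_zero] at h2
      have h3 : 0 < x - a := by linarith [hx.1]
      rcases div_pos_iff.mp h2 with ⟨h4, _⟩ | ⟨_, h5⟩
      · exact h4
      · linarith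
  have h6 : f a < f (a + b) :=
    hmono (left_mem_Icc.mpr (by linarith)) (right_mem_Icc.mpr (by linarith)) (by linarith)
  have h7 : f (a + b) ≤ f a := hmax _ (by rw [add_sub_cancel_left, abs_of_pos hbpos]; exact hbε)
  linarith

/-- One-sided derivative sign at a max approached from the left. -/
lemma deriv_nonneg_of_leftmax {g : ℝ → ℝ} {t0 G ε : ℝ} (hε : 0 < ε)
    (hmax : ∀ t, t0 - ε < t → t < t0 → g t ≤ g t0)
    (hd : HasDerivAt g G t0) : 0 ≤ G := by
  have hslope : Filter.Tendsto (slope g t0) (nhdsWithin t0 {t0}ᶜ) (nhds G) :=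
    hasDerivAt_iff_tendsto_slope.mp hd
  have hmono : nhdsWithin t0 (Iio t0) ≤ nhdsWithin t0 {t0}ᶜ :=
    nhdsWithin_mono _ (fun x hx => ne_of_lt hx)
  have hslope' : Filter.Tendsto (slope g t0) (nhdsWithin t0 (Iio t0)) (nhds G) :=
    hslope.mono_left hmono
  have hev : ∀ᶠ t in nhdsWithin t0 (Iio t0), 0 ≤ slope g t0 t := by
    filter_upwards [Ioo_mem_nhdsLT_of_mem (⟨by linarith, le_refl t0⟩ : t0 ∈ Ioc (t0 - ε) t0)]
      with t ht
    rw [slope_def_field]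
    apply div_nonneg_iff.mpr
    exact Or.inr ⟨by linarith [hmax t ht.1 ht.2], by linarith [ht.2]⟩
  exact ge_of_tendsto hslope' hev

set_option maxHeartbeats 1000000 in
/-- The key weak-maximum-principle lemma. -/
lemma key (k : ℕ) (Ω : Set (ℝ × ℝ)) (u w : ℝ × ℝ → ℝ)
    (hu : IsClassicalSol k Ω u) (hw : IsClassicalSol k Ω w)
    (V : Set (ℝ × ℝ)) (hVo : IsOpen V) (hVΩ : V ⊆ Ω)
    (hVc : IsCompact (closure V))
    (hVr : ∀ p ∈ V, 0 < p.1)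
    (τ : ℝ) (hτ : ∀ p ∈ V, p.2 ≤ τ)
    (a : ℝ) (ha : 0 < a) (m : ℤ)
    (hax : ∀ p ∈ V, a ≤ p.1 ∨ (|u p - m * π| < π/8 ∧ |w p - m * π| < π/8))
    (hpos : ∀ p ∈ V, w p < u p)
    (hbd : ∀ q ∈ closure V \ V, q.2 < τ → u q ≤ w q)
    (hcont : ContinuousOn (fun p => u p - w p) (closure V))
    (g : ℝ × ℝ) (hg : g ∈ V) : False := by
  set lam : ℝ := (k : ℝ) ^ 2 / a ^ 2 + 1 with hlam
  have hlampos : 0 < lam := by positivity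
  set v : ℝ × ℝ → ℝ := fun p => u p - w p with hv
  -- a point of V strictly below time τ
  obtain ⟨ε₀, hε₀, hball₀⟩ := Metric.isOpen_iff.mp hVo g hg
  set p' : ℝ × ℝ := (g.1, g.2 - ε₀ / 2) with hp'
  have hdistlem : ∀ x y : ℝ × ℝ, dist x y = max |x.1 - y.1| |x.2 - y.2| := by
    intro x y; rw [Prod.dist_eq]; simp [Real.dist_eq]
  have hp'V : p' ∈ V := by
    apply hball₀
    rw [Metric.mem_ball, hdistlem]
    simp only [hp']
    apply max_lt
    · simpa using hε₀
    · rw [show (g.1, g.2 - ε₀ / 2).2 - g.2 = -(ε₀ / 2) by dsimp only; ring, abs_neg,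
        abs_of_pos (by positivity)]
      linarith
  have hp'2 : p'.2 = g.2 - ε₀ / 2 := rfl
  have hp'τ : p'.2 < τ := by
    have := hτ g hg
    rw [hp'2]; linarith
  -- compact region and the max point
  set K : Set (ℝ × ℝ) := closure V ∩ {q | q.2 ≤ p'.2} with hK
  have hKc : IsCompact K := hVc.inter_right (isClosed_le continuous_snd continuous_const)
  have hKne : K.Nonempty := ⟨p', subset_closure hp'V, show p'.2 ≤ p'.2 from le_refl _⟩
  set φ : ℝ × ℝ → ℝ := fun q => Real.exp (-lam * q.2) * v q with hφ
  have hφc : ContinuousOn φ K := by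
    apply ContinuousOn.mul
    · exact ((Real.continuous_exp.comp (continuous_const.mul continuous_snd))).continuousOn
    · exact hcont.mono (inter_subset_left)
  obtain ⟨ps, hpsK, hpsmax⟩ := hKc.exists_isMaxOn hKne hφc
  have hφp' : φ p' ≤ φ ps := hpsmax ⟨subset_closure hp'V, show p'.2 ≤ p'.2 from le_refl _⟩
  have hφp'pos : 0 < φ p' := by
    apply mul_pos (Real.exp_pos _)
    exact sub_pos.mpr (hpos p' hp'V)
  have hφpspos : 0 < φ ps := lt_of_lt_of_le hφp'pos hφp'
  have hvps : 0 < v ps := by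
    by_contra hcon
    push_neg at hcon
    have : φ ps ≤ 0 :=
      mul_nonpos_iff.mpr (Or.inl ⟨(Real.exp_pos _).le, hcon⟩)
    linarith
  have hpsV : ps ∈ V := by
    by_contra hcon
    have : u ps ≤ w ps := hbd ps ⟨hpsK.1, hcon⟩ (lt_of_le_of_lt hpsK.2 hp'τ)
    simp only [hv] at hvps; linarith
  have hpsΩ : ps ∈ Ω := hVΩ hpsV
  obtain ⟨εs, hεs, hballs⟩ := Metric.isOpen_iff.mp hVo ps hpsV
  -- membership lemmas
  have hmemr : ∀ r : ℝ, |r - ps.1| < εs → (r, ps.2) ∈ V := by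
    intro r hr
    apply hballs
    rw [Metric.mem_ball, hdistlem]
    apply max_lt
    · simpa using hr
    · simpa using hεs
  have hmemt : ∀ t : ℝ, |t - ps.2| < εs → (ps.1, t) ∈ V := by
    intro t ht
    apply hballs
    rw [Metric.mem_ball, hdistlem]
    apply max_lt
    · simpa using hεs
    · simpa using ht
  -- r-direction analysis
  set f : ℝ → ℝ := fun r => u (r, ps.2) - w (r, ps.2) with hfdef
  have hflocmax : ∀ r, |r - ps.1| < εs → f r ≤ f ps.1 := by
    intro r hr
    have hrK : (r, ps.2) ∈ K := ⟨subset_closure (hmemr r hr), hpsK.2⟩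
    have h1 : φ (r, ps.2) ≤ φ ps := hpsmax hrK
    have hexp : (0:ℝ) < Real.exp (-lam * ps.2) := Real.exp_pos _
    have h2 : φ (r, ps.2) = Real.exp (-lam * ps.2) * f r := rfl
    have h3 : φ ps = Real.exp (-lam * ps.2) * f ps.1 := rfl
    rw [h2, h3] at h1
    exact le_of_mul_le_mul_left h1 hexp
  have hdiffu : ∀ r : ℝ, |r - ps.1| < εs → DifferentiableAt ℝ (fun r' => u (r', ps.2)) r :=
    fun r hr => (hu.1 (r, ps.2) (hVΩ (hmemr r hr))).1
  have hdiffw : ∀ r : ℝ, |r - ps.1| < εs → DifferentiableAt ℝ (fun r' => w (r', ps.2)) r :=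
    fun r hr => (hw.1 (r, ps.2) (hVΩ (hmemr r hr))).1
  have hfdiff : ∀ r, |r - ps.1| < εs → DifferentiableAt ℝ f r :=
    fun r hr => (hdiffu r hr).sub (hdiffw r hr)
  set F : ℝ → ℝ := fun r => pdr u (r, ps.2) - pdr w (r, ps.2) with hFdef
  have hderivf : ∀ r, |r - ps.1| < εs → deriv f r = F r := by
    intro r hr
    rw [hfdef]
    rw [deriv_fun_sub (hdiffu r hr) (hdiffw r hr)]
    rfl
  have hεs0 : |ps.1 - ps.1| < εs := by simpa using hεs
  have hderiv0 : deriv f ps.1 = 0 := by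
    apply IsLocalMax.deriv_eq_zero
    filter_upwards [Metric.ball_mem_nhds ps.1 hεs] with r hr
    exact hflocmax r (by rwa [Metric.mem_ball, Real.dist_eq] at hr)
  have hF0 : F ps.1 = 0 := by rw [← hderivf ps.1 hεs0, hderiv0]
  have hpdr_eq : pdr u ps = pdr w ps := by
    have h1 : F ps.1 = pdr u ps - pdr w ps := rfl
    rw [hF0] at h1; linarith
  have hFdiff : DifferentiableAt ℝ F ps.1 :=
    ((hu.1 ps hpsΩ).2.1).sub ((hw.1 ps hpsΩ).2.1)
  have hD2 : deriv F ps.1 ≤ 0 :=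
    second_deriv_nonpos_of_localmax hεs hflocmax hfdiff hderivf hF0 hFdiff
  have hD2' : pdrr u ps - pdrr w ps ≤ 0 := by
    have h1 : deriv F ps.1 = pdrr u ps - pdrr w ps := by
      rw [hFdef, deriv_fun_sub ((hu.1 ps hpsΩ).2.1) ((hw.1 ps hpsΩ).2.1)]
      rfl
    rw [← h1]; exact hD2
  -- t-direction analysis
  have hvt : HasDerivAt (fun t => u (ps.1, t) - w (ps.1, t)) (pdt u ps - pdt w ps) ps.2 :=
    ((hu.1 ps hpsΩ).2.2.hasDerivAt).sub ((hw.1 ps hpsΩ).2.2.hasDerivAt)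
  have hexp' : HasDerivAt (fun t : ℝ => Real.exp (-lam * t))
      (Real.exp (-lam * ps.2) * (-lam)) ps.2 := by
    have h1 : HasDerivAt (fun t : ℝ => -lam * t) (-lam) ps.2 := by
      simpa using (hasDerivAt_id ps.2).const_mul (-lam)
    exact h1.exp
  set gg : ℝ → ℝ := fun t => Real.exp (-lam * t) * (u (ps.1, t) - w (ps.1, t)) with hggdef
  have hggd : HasDerivAt gg
      (Real.exp (-lam * ps.2) * (-lam) * (u (ps.1, ps.2) - w (ps.1, ps.2)) +
        Real.exp (-lam * ps.2) * (pdt u ps - pdt w ps)) ps.2 := hexp'.mul hvt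
  have hggmax : ∀ t, ps.2 - εs < t → t < ps.2 → gg t ≤ gg ps.2 := by
    intro t h1 h2
    have htV : (ps.1, t) ∈ V := hmemt t (by rw [abs_sub_lt_iff]; constructor <;> linarith)
    have htK : (ps.1, t) ∈ K := ⟨subset_closure htV, le_trans h2.le hpsK.2⟩
    have h0 : φ (ps.1, t) ≤ φ ps := hpsmax htK
    have e1 : gg t = φ (ps.1, t) := rfl
    have e2 : gg ps.2 = φ ps := rfl
    rw [e1, e2]; exact h0
  have hG : 0 ≤ Real.exp (-lam * ps.2) * (-lam) * (u (ps.1, ps.2) - w (ps.1, ps.2)) +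
      Real.exp (-lam * ps.2) * (pdt u ps - pdt w ps) :=
    deriv_nonneg_of_leftmax hεs hggmax hggd
  have hmain : lam * v ps ≤ pdt u ps - pdt w ps := by
    by_contra hcon
    push_neg at hcon
    have hE := Real.exp_pos (-lam * ps.2)
    have heq : Real.exp (-lam * ps.2) * (-lam) * (u (ps.1, ps.2) - w (ps.1, ps.2)) +
        Real.exp (-lam * ps.2) * (pdt u ps - pdt w ps) =
        Real.exp (-lam * ps.2) * ((pdt u ps - pdt w ps) - lam * v ps) := by
      have h1 : u (ps.1, ps.2) = u ps := rfl
      have h2 : w (ps.1, ps.2) = w ps := rfl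
      have h3 : v ps = u ps - w ps := rfl
      rw [h1, h2, h3]; ring
    rw [heq] at hG
    nlinarith [mul_neg_of_pos_of_neg hE
      (by linarith : (pdt u ps - pdt w ps) - lam * v ps < 0)]
  -- use the PDE
  have hequ := hu.2.2.2.2 ps hpsΩ
  have heqw := hw.2.2.2.2 ps hpsΩ
  have hrpos : 0 < ps.1 := hVr ps hpsV
  set sdif : ℝ := sin (2 * u ps) - sin (2 * w ps) with hsdif
  have hfin : lam * v ps + (k:ℝ)^2 * sdif / (2 * ps.1^2) ≤ 0 := by
    have hsub : pdt u ps - pdt w ps = (pdrr u ps - pdrr w ps)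
        - (k:ℝ)^2 * sdif / (2 * ps.1^2) := by
      rw [hequ, heqw, hpdr_eq, hsdif]; ring
    rw [hsub] at hmain
    linarith
  have hr2 : (0:ℝ) < ps.1^2 := by positivity
  have hfin' : lam * v ps * (2 * ps.1^2) + (k:ℝ)^2 * sdif ≤ 0 := by
    have h3 : (lam * v ps + (k:ℝ)^2 * sdif / (2 * ps.1^2)) * (2 * ps.1^2) ≤ 0 :=
      mul_nonpos_of_nonpos_of_nonneg hfin (by positivity)
    have h4 : (lam * v ps + (k:ℝ)^2 * sdif / (2 * ps.1^2)) * (2 * ps.1^2) =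
        lam * v ps * (2 * ps.1^2) + (k:ℝ)^2 * sdif := by
      field_simp
    linarith [h4 ▸ h3]
  rcases hax ps hpsV with hcase | ⟨hum, hwm⟩
  · -- away from the axis : Lipschitz bound on sin
    have hsge : -(2 * v ps) ≤ sdif := by
      have h1 : |sdif| ≤ |2 * u ps - 2 * w ps| := sin_diff_le _ _
      have h2 : |2 * u ps - 2 * w ps| = 2 * v ps := by
        rw [show 2 * u ps - 2 * w ps = 2 * v ps by rw [hv]; ring]
        exact abs_of_pos (by linarith)
      linarith [neg_abs_le sdif]
    have hr2a : a^2 ≤ ps.1^2 := by nlinarith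
    have s1 : (k:ℝ)^2 * (-(2 * v ps)) ≤ (k:ℝ)^2 * sdif :=
      mul_le_mul_of_nonneg_left hsge (by positivity)
    have s2 : lam * v ps * (2 * a^2) ≤ lam * v ps * (2 * ps.1^2) :=
      mul_le_mul_of_nonneg_left (by nlinarith) (le_of_lt (mul_pos hlampos hvps))
    have s4 : lam * (2 * a^2) = 2 * (k:ℝ)^2 + 2 * a^2 := by
      rw [hlam]; field_simp
    nlinarith [mul_pos (mul_pos two_pos (pow_pos ha 2)) hvps]
  · -- near the axis : sign via monotonicity of sin
    have key1 : ∀ x : ℝ, Real.sin (x + m * (2*π)) = Real.sin x :=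
      fun x => Real.sin_add_int_mul_two_pi x m
    have hmm : (m:ℝ) * (2*π) = 2 * ((m:ℝ) * π) := by ring
    have hxu : Real.sin (2 * u ps) = Real.sin (2 * u ps - m * (2*π)) := by
      conv_lhs => rw [show (2 * u ps) = (2 * u ps - m * (2*π)) + m * (2*π) by ring]
      exact key1 _
    have hxw : Real.sin (2 * w ps) = Real.sin (2 * w ps - m * (2*π)) := by
      conv_lhs => rw [show (2 * w ps) = (2 * w ps - m * (2*π)) + m * (2*π) by ring]
      exact key1 _
    obtain ⟨hu1, hu2⟩ := abs_lt.mp hum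
    obtain ⟨hw1, hw2⟩ := abs_lt.mp hwm
    have hb_u : 2 * u ps - m * (2*π) ∈ Icc (-(π/2)) (π/2) := by
      constructor <;> [skip; skip] <;> rw [hmm] at * <;> [linarith [pi_pos]; linarith [pi_pos]]
    have hb_w : 2 * w ps - m * (2*π) ∈ Icc (-(π/2)) (π/2) := by
      constructor <;> [skip; skip] <;> rw [hmm] at * <;> [linarith [pi_pos]; linarith [pi_pos]]
    have hle : 2 * w ps - m * (2*π) ≤ 2 * u ps - m * (2*π) := by
      have := hpos ps hpsV; linarith
    have hmono : Real.sin (2 * w ps - m * (2*π)) ≤ Real.sin (2 * u ps - m * (2*π)) :=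
      Real.strictMonoOn_sin.monotoneOn hb_w hb_u hle
    have hsge : 0 ≤ sdif := by rw [hsdif, hxu, hxw]; linarith
    have h5 : 0 < lam * v ps := mul_pos hlampos hvps
    have h6 : 0 ≤ (k:ℝ)^2 * sdif := by positivity
    have h7 : 0 ≤ (k:ℝ)^2 * sdif / (2 * ps.1^2) := div_nonneg h6 (by positivity)
    have h8 : lam * v ps ≤ 0 := le_trans (le_add_of_nonneg_right h7) hfin
    exact absurd h8 (not_le.mpr h5)

lemma abs_fst_le_dist {x y : ℝ × ℝ} : |x.1 - y.1| ≤ dist x y := by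
  rw [Prod.dist_eq, Real.dist_eq, Real.dist_eq]; exact le_max_left _ _

lemma abs_snd_le_dist {x y : ℝ × ℝ} : |x.2 - y.2| ≤ dist x y := by
  rw [Prod.dist_eq, Real.dist_eq, Real.dist_eq]; exact le_max_right _ _

set_option maxHeartbeats 1000000 in
/-- Main auxiliary lemma: one-sided configuration. -/
lemma aux (k : ℕ) (T : EReal)
    (u w ψ : ℝ × ℝ → ℝ)
    (hu : IsClassicalSol k {p : ℝ × ℝ | p.1 ∈ Ioo (0:ℝ) 1 ∧ 0 < p.2 ∧ (p.2 : EReal) < T} u)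
    (hw : IsClassicalSol k {p : ℝ × ℝ | p.1 ∈ Ioo (0:ℝ) 1 ∧ 0 < p.2 ∧ (p.2 : EReal) < T} w)
    (t₁ t₂ R tstar : ℝ) (hRpos : 0 < R)
    (Γ : Set (ℝ × ℝ))
    (hΓsub : Γ ⊆ Icc 0 R ×ˢ Icc t₁ t₂)
    (hΓΩ : Γ ⊆ {p : ℝ × ℝ | p.1 ∈ Ioo (0:ℝ) 1 ∧ 0 < p.2 ∧ (p.2 : EReal) < T})
    (hΓball : ∀ q ∈ Γ, ∃ ε > 0, Metric.ball q ε ∩ (Icc 0 R ×ˢ Icc t₁ t₂) ⊆ Γ)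
    (hΓint : ∀ p ∈ Γ, 0 < p.1 ∧ p.1 < R ∧ t₁ < p.2)
    (hcu : ContinuousOn u (Icc 0 R ×ˢ Icc t₁ t₂))
    (hcw : ContinuousOn w (Icc 0 R ×ˢ Icc t₁ t₂))
    (hcψ : ContinuousOn ψ (Icc 0 R ×ˢ Icc t₁ t₂))
    (hWU : ∀ p ∈ Γ, w p < u p)
    (htstar : tstar ≤ t₂)
    (hψZ : ∀ q ∈ closure Γ, q.2 < tstar → ψ q ≠ 0)
    (hbdry : ∀ q ∈ closure Γ \ Γ, ψ q ≤ 0 → u q = w q)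
    (haxis : (∀ q ∈ closure Γ, q.1 = 0 → ψ q ≤ 0 → False) ∨
      ∃ m : ℤ, ∀ t : ℝ, t₁ ≤ t → t ≤ t₂ → u (0, t) = (m:ℝ) * π ∧ w (0, t) = (m:ℝ) * π)
    (g : ℝ × ℝ) (hgΓ : g ∈ Γ) (hgt : g.2 < tstar) (hgψ : ψ g < 0) : False := by
  set box : Set (ℝ × ℝ) := Icc 0 R ×ˢ Icc t₁ t₂ with hbox
  have hboxclosed : IsClosed box := (isClosed_Icc).prod isClosed_Icc
  have hboxcompact : IsCompact box := (isCompact_Icc).prod isCompact_Icc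
  set G : Set (ℝ × ℝ) := {p | p ∈ Γ ∧ p.2 < tstar ∧ ψ p < 0} with hG
  -- G is open (in the metric sense)
  have hGball : ∀ q ∈ G, ∃ ε > 0, Metric.ball q ε ⊆ G := by
    rintro q ⟨hqΓ, hqt, hqψ⟩
    obtain ⟨ε₀, hε₀, hb₀⟩ := hΓball q hqΓ
    have hq_box : q ∈ box := hΓsub hqΓ
    have hev : {p : ℝ × ℝ | ψ p < 0} ∈ nhdsWithin q box :=
      (hcψ q hq_box).eventually (eventually_lt_nhds hqψ)
    obtain ⟨ε₁, hε₁, hb₁⟩ := Metric.mem_nhdsWithin_iff.mp hev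
    obtain ⟨hq1, hq2, hq3⟩ := hΓint q hqΓ
    refine ⟨min (min ε₀ ε₁) (min (min q.1 (R - q.1)) (min (q.2 - t₁) (tstar - q.2))), ?_, ?_⟩
    · simp only [lt_min_iff]
      refine ⟨⟨hε₀, hε₁⟩, ⟨hq1, by linarith⟩, by linarith, by linarith⟩
    · intro p hp
      have hd := Metric.mem_ball.mp hp
      have hd0 : dist p q < ε₀ := hd.trans_le ((min_le_left _ _).trans (min_le_left _ _))
      have hd1 : dist p q < ε₁ := hd.trans_le ((min_le_left _ _).trans (min_le_right _ _))
      have hdr1 : dist p q < q.1 := hd.trans_le ((min_le_right _ _).trans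
        ((min_le_left _ _).trans (min_le_left _ _)))
      have hdr2 : dist p q < R - q.1 := hd.trans_le ((min_le_right _ _).trans
        ((min_le_left _ _).trans (min_le_right _ _)))
      have hdt1 : dist p q < q.2 - t₁ := hd.trans_le ((min_le_right _ _).trans
        ((min_le_right _ _).trans (min_le_left _ _)))
      have hdt2 : dist p q < tstar - q.2 := hd.trans_le ((min_le_right _ _).trans
        ((min_le_right _ _).trans (min_le_right _ _)))
      have ha1 := abs_lt.mp (lt_of_le_of_lt abs_fst_le_dist hdr1)
      have ha2 := abs_lt.mp (lt_of_le_of_lt abs_fst_le_dist hdr2)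
      have ha3 := abs_lt.mp (lt_of_le_of_lt abs_snd_le_dist hdt1)
      have ha4 := abs_lt.mp (lt_of_le_of_lt abs_snd_le_dist hdt2)
      have hpbox : p ∈ box := by
        refine ⟨⟨by linarith [ha1.1], by linarith [ha2.2]⟩,
          by linarith [ha3.1], by linarith [ha4.2, htstar]⟩
      refine ⟨hb₀ ⟨by rwa [Metric.mem_ball], hpbox⟩, by linarith [ha4.2], ?_⟩
      exact hb₁ ⟨by rwa [Metric.mem_ball], hpbox⟩
  have hgG : g ∈ G := ⟨hgΓ, hgt, hgψ⟩
  set V : Set (ℝ × ℝ) := connectedComponentIn G g with hV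
  have hgV : g ∈ V := mem_connectedComponentIn hgG
  have hVG : V ⊆ G := connectedComponentIn_subset G g
  have hVΓ : V ⊆ Γ := fun p hp => (hVG hp).1
  have hVbox : V ⊆ box := fun p hp => hΓsub (hVΓ hp)
  have hVopen : IsOpen V := by
    rw [Metric.isOpen_iff]
    intro q hqV
    obtain ⟨ε, hε, hb⟩ := hGball q (hVG hqV)
    refine ⟨ε, hε, ?_⟩
    have h1 : Metric.ball q ε ⊆ connectedComponentIn G q :=
      (convex_ball q ε).isPreconnected.subset_connectedComponentIn
        (Metric.mem_ball_self hε) hb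
    rwa [hV, connectedComponentIn_eq hqV]
  have hclV_box : closure V ⊆ box := closure_minimal hVbox hboxclosed
  have hclΓ : closure V ⊆ closure Γ := closure_mono hVΓ
  have hψcl : ∀ q ∈ closure V, ψ q ≤ 0 := by
    intro q hq
    have hnb : (nhdsWithin q V).NeBot := mem_closure_iff_nhdsWithin_neBot.mp hq
    have ht : Filter.Tendsto ψ (nhdsWithin q V) (nhds (ψ q)) :=
      ((hcψ q (hclV_box hq))).mono_left (nhdsWithin_mono _ hVbox)
    exact le_of_tendsto ht (eventually_mem_nhdsWithin.mono
      (fun p hp => le_of_lt (hVG hp).2.2))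
  have hbd : ∀ q ∈ closure V \ V, q.2 < tstar → u q ≤ w q := by
    rintro q ⟨hqc, hqnV⟩ hqt
    have hqΓ' : q ∉ Γ := by
      intro hqΓ
      have h3 : ψ q < 0 := lt_of_le_of_ne (hψcl q hqc) (hψZ q (hclΓ hqc) hqt)
      obtain ⟨ε, hε, hb⟩ := hGball q ⟨hqΓ, hqt, h3⟩
      obtain ⟨y, hyV, hyd⟩ := Metric.mem_closure_iff.mp hqc ε hε
      have hyb : y ∈ Metric.ball q ε := by rwa [Metric.mem_ball, dist_comm]
      have h4 : Metric.ball q ε ⊆ connectedComponentIn G y :=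
        (convex_ball q ε).isPreconnected.subset_connectedComponentIn hyb hb
      apply hqnV
      rw [hV, connectedComponentIn_eq hyV]
      exact h4 (Metric.mem_ball_self hε)
    exact le_of_eq (hbdry q ⟨hclΓ hqc, hqΓ'⟩ (hψcl q hqc))
  have hVc : IsCompact (closure V) :=
    hboxcompact.of_isClosed_subset isClosed_closure hclV_box
  have hVΩ' : V ⊆ {p : ℝ × ℝ | p.1 ∈ Ioo (0:ℝ) 1 ∧ 0 < p.2 ∧ (p.2 : EReal) < T} :=
    fun p hp => hΓΩ (hVΓ hp)
  have hVr : ∀ p ∈ V, 0 < p.1 := fun p hp => (hΓint p (hVΓ hp)).1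
  have hτ : ∀ p ∈ V, p.2 ≤ tstar := fun p hp => le_of_lt (hVG hp).2.1
  have hcont : ContinuousOn (fun p => u p - w p) (closure V) :=
    (hcu.sub hcw).mono hclV_box
  have hpos : ∀ p ∈ V, w p < u p := fun p hp => hWU p (hVΓ hp)
  -- the axis parameters
  obtain ⟨a, ha, m, hax⟩ :
      ∃ a : ℝ, 0 < a ∧ ∃ m : ℤ, ∀ p ∈ V,
        a ≤ p.1 ∨ (|u p - m * π| < π/8 ∧ |w p - m * π| < π/8) := by
    rcases haxis with hax0 | ⟨m, hm⟩
    · have hne : ∀ q ∈ closure V, q.1 ≠ 0 := by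
        intro q hq h0
        exact hax0 q (hclΓ hq) h0 (hψcl q hq)
      obtain ⟨qm, hqm, hqmin⟩ := hVc.exists_isMinOn ⟨g, subset_closure hgV⟩
        continuous_fst.continuousOn
      refine ⟨qm.1, lt_of_le_of_ne (hclV_box hqm).1.1 (Ne.symm (hne qm hqm)), 0, ?_⟩
      intro p hp
      exact Or.inl (hqmin (subset_closure hp))
    · have hUCu := hboxcompact.uniformContinuousOn_of_continuous hcu
      have hUCw := hboxcompact.uniformContinuousOn_of_continuous hcw
      obtain ⟨δu, hδu, hu8⟩ := Metric.uniformContinuousOn_iff.mp hUCu (π/8) (by positivity)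
      obtain ⟨δw, hδw, hw8⟩ := Metric.uniformContinuousOn_iff.mp hUCw (π/8) (by positivity)
      refine ⟨min δu δw, lt_min hδu hδw, m, ?_⟩
      intro p hp
      by_cases hc : min δu δw ≤ p.1
      · exact Or.inl hc
      · push_neg at hc
        right
        have hpbox : p ∈ box := hVbox hp
        have h0box : ((0:ℝ), p.2) ∈ box := ⟨⟨le_refl 0, hRpos.le⟩, hpbox.2⟩
        have h01 : 0 ≤ p.1 := hpbox.1.1
        have hdist : dist p ((0:ℝ), p.2) = p.1 := by
          rw [Prod.dist_eq, Real.dist_eq, Real.dist_eq, sub_zero, sub_self, abs_zero,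
            abs_of_nonneg h01]
          exact max_eq_left h01
        have hdu : dist p ((0:ℝ), p.2) < δu := by
          rw [hdist]; exact lt_of_lt_of_le hc (min_le_left _ _)
        have hdw : dist p ((0:ℝ), p.2) < δw := by
          rw [hdist]; exact lt_of_lt_of_le hc (min_le_right _ _)
        have hum := hu8 p hpbox _ h0box hdu
        have hwm := hw8 p hpbox _ h0box hdw
        rw [Real.dist_eq] at hum hwm
        obtain ⟨he1, he2⟩ := hm p.2 hpbox.2.1 hpbox.2.2
        rw [he1] at hum
        rw [he2] at hwm
        exact ⟨hum, hwm⟩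
  exact key k _ u w hu hw V hVopen hVΩ' hVc hVr tstar hτ a ha m hax hpos hbd hcont g hgV

set_option maxHeartbeats 1000000 in
/-- Paper's Lemma 6.3: let `Γ` be a nonempty connected component of
`{(r,t) ∈ [0,R] × [t₁,t₂] : h₁ < h < h₂}` separated from `h₁` and `h₂` by a constant `C`
on its closure. Then `Γ` reaches the lateral or the initial part of the parabolic boundary. -/
theorem component_of_h1_lt_h_lt_h2_touches_parabolic_boundary
    (k : ℕ) (hk : 1 ≤ k) (T : EReal) (hT : 0 < T)
    (h h₁ h₂ : ℝ × ℝ → ℝ)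
    (hc : ContinuousOn h {p : ℝ × ℝ | p.1 ∈ Icc (0:ℝ) 1 ∧ 0 ≤ p.2 ∧ (p.2 : EReal) < T})
    (hc1 : ContinuousOn h₁ {p : ℝ × ℝ | p.1 ∈ Icc (0:ℝ) 1 ∧ 0 ≤ p.2 ∧ (p.2 : EReal) < T})
    (hc2 : ContinuousOn h₂ {p : ℝ × ℝ | p.1 ∈ Icc (0:ℝ) 1 ∧ 0 ≤ p.2 ∧ (p.2 : EReal) < T})
    (hs : IsClassicalSol k {p : ℝ × ℝ | p.1 ∈ Ioo (0:ℝ) 1 ∧ 0 < p.2 ∧ (p.2 : EReal) < T} h)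
    (hs1 : IsClassicalSol k {p : ℝ × ℝ | p.1 ∈ Ioo (0:ℝ) 1 ∧ 0 < p.2 ∧ (p.2 : EReal) < T} h₁)
    (hs2 : IsClassicalSol k {p : ℝ × ℝ | p.1 ∈ Ioo (0:ℝ) 1 ∧ 0 < p.2 ∧ (p.2 : EReal) < T} h₂)
    (hzero1 :
      (∀ t : ℝ, 0 ≤ t → (t : EReal) < T → h (0, t) ≠ h₁ (0, t)) ∨
      ∃ m : ℤ, ∀ t : ℝ, 0 ≤ t → (t : EReal) < T →
        h (0, t) = (m : ℝ) * π ∧ h₁ (0, t) = (m : ℝ) * π)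
    (hzero2 :
      (∀ t : ℝ, 0 ≤ t → (t : EReal) < T → h (0, t) ≠ h₂ (0, t)) ∨
      ∃ m : ℤ, ∀ t : ℝ, 0 ≤ t → (t : EReal) < T →
        h (0, t) = (m : ℝ) * π ∧ h₂ (0, t) = (m : ℝ) * π)
    (t₁ t₂ : ℝ) (ht₁ : 0 ≤ t₁) (ht12 : t₁ < t₂) (ht₂ : (t₂ : EReal) < T)
    (R : ℝ) (hRpos : 0 < R) (hR : R ≤ 1)
    (Γ : Set (ℝ × ℝ)) (p₀ : ℝ × ℝ)
    (hp₀ : p₀ ∈ {p : ℝ × ℝ | p ∈ Icc 0 R ×ˢ Icc t₁ t₂ ∧ h₁ p < h p ∧ h p < h₂ p})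
    (hΓ : Γ = connectedComponentIn
      {p : ℝ × ℝ | p ∈ Icc 0 R ×ˢ Icc t₁ t₂ ∧ h₁ p < h p ∧ h p < h₂ p} p₀)
    (hC : ∃ C : ℝ, ∀ q ∈ closure Γ, h₁ q < C ∧ C < h₂ q) :
    (Γ ∩ ((({0} : Set ℝ) ×ˢ Icc t₁ t₂) ∪ (({R} : Set ℝ) ×ˢ Icc t₁ t₂)
        ∪ (Icc 0 R ×ˢ ({t₁} : Set ℝ)))).Nonempty := by

  by_contra hcon
  rw [Set.not_nonempty_iff_eq_empty] at hcon
  set box : Set (ℝ × ℝ) := Icc (0:ℝ) R ×ˢ Icc t₁ t₂ with hboxdef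
  set S : Set (ℝ × ℝ) := {p : ℝ × ℝ | p ∈ Icc 0 R ×ˢ Icc t₁ t₂ ∧ h₁ p < h p ∧ h p < h₂ p}
    with hSdef
  have hboxclosed : IsClosed box := (isClosed_Icc).prod isClosed_Icc
  have hboxdom : box ⊆ {p : ℝ × ℝ | p.1 ∈ Icc (0:ℝ) 1 ∧ 0 ≤ p.2 ∧ (p.2 : EReal) < T} := by
    rintro p ⟨⟨hp1, hp2⟩, hp3, hp4⟩
    exact ⟨⟨hp1, hp2.trans hR⟩, ht₁.trans hp3,
      lt_of_le_of_lt (EReal.coe_le_coe_iff.mpr hp4) ht₂⟩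
  have hcb : ContinuousOn h box := hc.mono hboxdom
  have hcb1 : ContinuousOn h₁ box := hc1.mono hboxdom
  have hcb2 : ContinuousOn h₂ box := hc2.mono hboxdom
  have hΓS : Γ ⊆ S := by rw [hΓ]; exact connectedComponentIn_subset _ _
  have hp₀Γ : p₀ ∈ Γ := by rw [hΓ]; exact mem_connectedComponentIn hp₀
  have hΓbox : Γ ⊆ box := fun p hp => (hΓS hp).1
  have hclbox : closure Γ ⊆ box := closure_minimal hΓbox hboxclosed
  -- avoidance of the parabolic boundary
  have hΓint : ∀ p ∈ Γ, 0 < p.1 ∧ p.1 < R ∧ t₁ < p.2 := by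
    intro p hp
    have hpb := hΓbox hp
    have hnm : ∀ x, x ∈ Γ → x ∉ ((({0} : Set ℝ) ×ˢ Icc t₁ t₂) ∪ (({R} : Set ℝ) ×ˢ Icc t₁ t₂)
        ∪ (Icc 0 R ×ˢ ({t₁} : Set ℝ))) := by
      intro x hx hmem
      have : x ∈ (∅ : Set (ℝ × ℝ)) := hcon ▸ ⟨hx, hmem⟩
      exact this
    refine ⟨?_, ?_, ?_⟩
    · rcases lt_or_eq_of_le hpb.1.1 with hlt | heq
      · exact hlt
      · exact absurd (Or.inl (Or.inl ⟨heq.symm, hpb.2⟩)) (hnm p hp)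
    · rcases lt_or_eq_of_le hpb.1.2 with hlt | heq
      · exact hlt
      · exact absurd (Or.inl (Or.inr ⟨heq, hpb.2⟩)) (hnm p hp)
    · rcases lt_or_eq_of_le hpb.2.1 with hlt | heq
      · exact hlt
      · exact absurd (Or.inr ⟨hpb.1, heq.symm⟩) (hnm p hp)
  have hΓΩ : Γ ⊆ {p : ℝ × ℝ | p.1 ∈ Ioo (0:ℝ) 1 ∧ 0 < p.2 ∧ (p.2 : EReal) < T} := by
    intro p hp
    obtain ⟨i1, i2, i3⟩ := hΓint p hp
    exact ⟨⟨i1, lt_of_lt_of_le i2 hR⟩, lt_of_le_of_lt ht₁ i3,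
      lt_of_le_of_lt (EReal.coe_le_coe_iff.mpr (hΓbox hp).2.2) ht₂⟩
  -- S is relatively open in the box
  have hrelopen : ∀ q ∈ S, ∃ ε > 0, Metric.ball q ε ∩ box ⊆ S := by
    rintro q ⟨hqbox, hq1, hq2⟩
    have c1 : Filter.Tendsto (fun p => h p - h₁ p) (nhdsWithin q box)
        (nhds (h q - h₁ q)) := (hcb q hqbox).sub (hcb1 q hqbox)
    have c2 : Filter.Tendsto (fun p => h₂ p - h p) (nhdsWithin q box)
        (nhds (h₂ q - h q)) := (hcb2 q hqbox).sub (hcb q hqbox)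
    have e1 : ∀ᶠ p in nhdsWithin q box, 0 < h p - h₁ p :=
      c1.eventually (eventually_gt_nhds (sub_pos.mpr hq1))
    have e2 : ∀ᶠ p in nhdsWithin q box, 0 < h₂ p - h p :=
      c2.eventually (eventually_gt_nhds (sub_pos.mpr hq2))
    have e3 : {p : ℝ × ℝ | 0 < h p - h₁ p ∧ 0 < h₂ p - h p} ∈ nhdsWithin q box := e1.and e2
    obtain ⟨ε, hε, hb⟩ := Metric.mem_nhdsWithin_iff.mp e3
    refine ⟨ε, hε, fun p hp => ⟨hp.2, ?_, ?_⟩⟩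
    · have := (hb hp).1; linarith
    · have := (hb hp).2; linarith
  have hΓball : ∀ q ∈ Γ, ∃ ε > 0, Metric.ball q ε ∩ box ⊆ Γ := by
    intro q hq
    obtain ⟨ε, hε, hbS⟩ := hrelopen q (hΓS hq)
    have hconv : Convex ℝ (Metric.ball q ε ∩ box) :=
      (convex_ball q ε).inter ((convex_Icc _ _).prod (convex_Icc _ _))
    have hqm : q ∈ Metric.ball q ε ∩ box := ⟨Metric.mem_ball_self hε, hΓbox hq⟩
    have hsub : Metric.ball q ε ∩ box ⊆ connectedComponentIn S q :=
      hconv.isPreconnected.subset_connectedComponentIn hqm hbS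
    have hq' : q ∈ connectedComponentIn S p₀ := by rw [← hΓ]; exact hq
    refine ⟨ε, hε, ?_⟩
    rw [hΓ, connectedComponentIn_eq hq']
    exact hsub
  -- closure facts
  have hDle : ∀ q ∈ closure Γ, h₁ q ≤ h q ∧ h q ≤ h₂ q := by
    intro q hq
    haveI hnb : (nhdsWithin q Γ).NeBot := mem_closure_iff_nhdsWithin_neBot.mp hq
    have t1 : Filter.Tendsto (fun p => h p - h₁ p) (nhdsWithin q Γ)
        (nhds (h q - h₁ q)) :=
      ((hcb q (hclbox hq)).sub (hcb1 q (hclbox hq))).mono_left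
        (nhdsWithin_mono _ hΓbox)
    have t2 : Filter.Tendsto (fun p => h₂ p - h p) (nhdsWithin q Γ)
        (nhds (h₂ q - h q)) :=
      ((hcb2 q (hclbox hq)).sub (hcb q (hclbox hq))).mono_left
        (nhdsWithin_mono _ hΓbox)
    have e1 : 0 ≤ h q - h₁ q := ge_of_tendsto t1
      (eventually_mem_nhdsWithin.mono fun p hp => le_of_lt (sub_pos.mpr (hΓS hp).2.1))
    have e2 : 0 ≤ h₂ q - h q := ge_of_tendsto t2
      (eventually_mem_nhdsWithin.mono fun p hp => le_of_lt (sub_pos.mpr (hΓS hp).2.2))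
    constructor <;> linarith
  have hDS : ∀ q ∈ closure Γ, h₁ q < h q → h q < h₂ q → q ∈ Γ := by
    intro q hq hq1 hq2
    have hqS : q ∈ S := ⟨hclbox hq, hq1, hq2⟩
    obtain ⟨ε, hε, hbS⟩ := hrelopen q hqS
    obtain ⟨y, hyΓ, hyd⟩ := Metric.mem_closure_iff.mp hq ε hε
    have hym : y ∈ Metric.ball q ε ∩ box :=
      ⟨by rwa [Metric.mem_ball, dist_comm], hΓbox hyΓ⟩
    have hconv : Convex ℝ (Metric.ball q ε ∩ box) :=
      (convex_ball q ε).inter ((convex_Icc _ _).prod (convex_Icc _ _))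
    have hsub : Metric.ball q ε ∩ box ⊆ connectedComponentIn S y :=
      hconv.isPreconnected.subset_connectedComponentIn hym hbS
    have hy' : y ∈ connectedComponentIn S p₀ := by rw [← hΓ]; exact hyΓ
    rw [hΓ, connectedComponentIn_eq hy']
    exact hsub ⟨Metric.mem_ball_self hε, hclbox hq⟩
  have hDmm : ∀ q ∈ closure Γ \ Γ, h q = h₁ q ∨ h q = h₂ q := by
    rintro q ⟨hq, hqn⟩
    obtain ⟨l1, l2⟩ := hDle q hq
    by_contra hno
    push_neg at hno
    exact hqn (hDS q hq (lt_of_le_of_ne l1 (Ne.symm hno.1)) (lt_of_le_of_ne l2 hno.2))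
  obtain ⟨C, hC⟩ := hC
  -- going down inside Γ
  have hdown : ∀ p ∈ Γ, ∃ g ∈ Γ, g.2 < p.2 := by
    intro p hp
    obtain ⟨ε, hε, hb⟩ := hΓball p hp
    obtain ⟨i1, i2, i3⟩ := hΓint p hp
    set δ : ℝ := min (ε/2) ((p.2 - t₁)/2) with hδdef
    have hδpos : 0 < δ := lt_min (by linarith) (by linarith)
    have hδ1 : δ ≤ ε/2 := min_le_left _ _
    have hδ2 : δ ≤ (p.2 - t₁)/2 := min_le_right _ _
    have hpb := hΓbox hp
    refine ⟨(p.1, p.2 - δ), hb ⟨?_, ?_⟩, by dsimp only; linarith⟩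
    · rw [Metric.mem_ball, Prod.dist_eq, Real.dist_eq, Real.dist_eq]
      apply max_lt
      · rw [sub_self, abs_zero]; linarith
      · rw [show p.2 - δ - p.2 = -δ by ring, abs_neg, abs_of_pos hδpos]; linarith
    · exact ⟨hpb.1, by constructor <;> dsimp only <;> [linarith; linarith [hpb.2.2]]⟩
  -- construct tstar
  obtain ⟨tstar, hts1, hZprop, g, hgΓ, hgt⟩ :
      ∃ tstar : ℝ, tstar ≤ t₂ ∧ (∀ q ∈ closure Γ, q.2 < tstar → h q ≠ C) ∧
        ∃ g ∈ Γ, g.2 < tstar := by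
    set Z : Set (ℝ × ℝ) := closure Γ ∩ {p | h p = C} with hZdef
    have hZclosed : IsClosed Z := by
      apply isClosed_of_closure_subset
      intro q hq
      have hq1 : q ∈ closure Γ :=
        closure_minimal (inter_subset_left) isClosed_closure hq
      haveI hnb : (nhdsWithin q Z).NeBot := mem_closure_iff_nhdsWithin_neBot.mp hq
      have hZbox : Z ⊆ box := fun p hp => hclbox hp.1
      have t1 : Filter.Tendsto h (nhdsWithin q Z) (nhds (h q)) :=
        (hcb q (hclbox hq1)).mono_left (nhdsWithin_mono _ hZbox)
      have t2 : Filter.Tendsto h (nhdsWithin q Z) (nhds C) :=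
        Filter.Tendsto.congr' (eventually_mem_nhdsWithin.mono fun p hp => hp.2.symm)
          tendsto_const_nhds
      exact ⟨hq1, tendsto_nhds_unique t1 t2⟩
    have hZcompact : IsCompact Z := by
      apply IsCompact.of_isClosed_subset ((isCompact_Icc).prod isCompact_Icc) hZclosed
      exact fun p hp => hclbox hp.1
    rcases Z.eq_empty_or_nonempty with hZe | hZne
    · obtain ⟨g, hg, hg2⟩ := hdown p₀ hp₀Γ
      refine ⟨t₂, le_refl _, ?_, g, hg, lt_of_lt_of_le hg2 (hΓbox hp₀Γ).2.2⟩
      intro q hq _ hqC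
      have hqZ : q ∈ Z := ⟨hq, hqC⟩
      rw [hZe] at hqZ
      exact hqZ
    · obtain ⟨z, hzZ, hzmin⟩ := hZcompact.exists_isMinOn hZne continuous_snd.continuousOn
      have hzΓ : z ∈ Γ := by
        obtain ⟨d1, d2⟩ := hC z hzZ.1
        exact hDS z hzZ.1 (by rw [hzZ.2]; exact d1) (by rw [hzZ.2]; exact d2)
      obtain ⟨g, hg, hg2⟩ := hdown z hzΓ
      refine ⟨z.2, (hΓbox hzΓ).2.2, ?_, g, hg, hg2⟩
      intro q hq hqt hqC
      exact absurd (hzmin (⟨hq, hqC⟩ : q ∈ Z)) (not_le.mpr hqt)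
  have hgC : h g ≠ C := hZprop g (subset_closure hgΓ) hgt
  rcases lt_or_gt_of_ne hgC with hlt | hgtC
  · -- case h g < C : compare with h₁
    apply aux k T h h₁ (fun p => h p - C) hs hs1 t₁ t₂ R tstar hRpos Γ hΓbox hΓΩ hΓball
      hΓint hcb hcb1 (hcb.sub continuousOn_const)
      (fun p hp => (hΓS hp).2.1) hts1
      (fun q hq ht => sub_ne_zero.mpr (hZprop q hq ht))
      ?_ ?_ g hgΓ hgt (by linarith)
    · rintro q ⟨hq, hqn⟩ hle
      rcases hDmm q ⟨hq, hqn⟩ with he | he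
      · exact he
      · exact absurd he (by have := (hC q hq).2; intro hh; linarith)
    · rcases hzero1 with hz | ⟨m, hm⟩
      · left
        intro q hq h0 hψ
        have hqn : q ∉ Γ := fun hqΓ => absurd h0 (ne_of_gt (hΓint q hqΓ).1)
        have heq : h q = h₁ q := by
          rcases hDmm q ⟨hq, hqn⟩ with he | he
          · exact he
          · exact absurd he (by have := (hC q hq).2; intro hh; linarith)
        have hqbox := hclbox hq
        have hq0 : q = ((0:ℝ), q.2) := by rw [← h0]
        exact hz q.2 (ht₁.trans hqbox.2.1)
          (lt_of_le_of_lt (EReal.coe_le_coe_iff.mpr hqbox.2.2) ht₂)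
          (by rw [← hq0]; exact heq)
      · right
        refine ⟨m, fun t htl htu => ?_⟩
        exact hm t (ht₁.trans htl)
          (lt_of_le_of_lt (EReal.coe_le_coe_iff.mpr htu) ht₂)
  · -- case h g > C : compare with h₂
    apply aux k T h₂ h (fun p => C - h p) hs2 hs t₁ t₂ R tstar hRpos Γ hΓbox hΓΩ hΓball
      hΓint hcb2 hcb (continuousOn_const.sub hcb)
      (fun p hp => (hΓS hp).2.2) hts1
      (fun q hq ht => sub_ne_zero.mpr (Ne.symm (hZprop q hq ht)))
      ?_ ?_ g hgΓ hgt (by linarith)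
    · rintro q ⟨hq, hqn⟩ hle
      rcases hDmm q ⟨hq, hqn⟩ with he | he
      · exact absurd he (by have := (hC q hq).1; intro hh; linarith)
      · exact he.symm
    · rcases hzero2 with hz | ⟨m, hm⟩
      · left
        intro q hq h0 hψ
        have hqn : q ∉ Γ := fun hqΓ => absurd h0 (ne_of_gt (hΓint q hqΓ).1)
        have heq : h q = h₂ q := by
          rcases hDmm q ⟨hq, hqn⟩ with he | he
          · exact absurd he (by have := (hC q hq).1; intro hh; linarith)
          · exact he
        have hqbox := hclbox hq
        have hq0 : q = ((0:ℝ), q.2) := by rw [← h0]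
        exact hz q.2 (ht₁.trans hqbox.2.1)
          (lt_of_le_of_lt (EReal.coe_le_coe_iff.mpr hqbox.2.2) ht₂)
          (by rw [← hq0]; exact heq)
      · right
        refine ⟨m, fun t htl htu => ?_⟩
        obtain ⟨e1, e2⟩ := hm t (ht₁.trans htl)
          (lt_of_le_of_lt (EReal.coe_le_coe_iff.mpr htu) ht₂)
        exact ⟨e2, e1⟩
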